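/- Let N be a Petri net with basis partition (T_E, T_I) where the T_I-induced subnet is acyclic and conflict-free. For any basis marking M_b with i-maximal marking M_{b,max}, every marking M in the implicit reach R_I(M_b) = {M | ∃σ ∈ T_I*, M_b[σ⟩M} can reach M_{b,max} by firing a sequence of implicit transitions: there exists σ ∈ T_I* with M[σ⟩M_{b,max}. -/

import Mathlib

/-- A Petri net with `m` places and `n` transitions. -/
structure PetriNet (m n : ℕ) where
  Pre : Fin m → Fin n → ℕ
  Post : Fin m → Fin n → ℕ

namespace PetriNet

variable {m n : ℕ}

/-- Incidence matrix `C = Post - Pre`. -/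
def C (N : PetriNet m n) (p : Fin m) (t : Fin n) : ℤ :=
  (N.Post p t : ℤ) - (N.Pre p t : ℤ)

/-- Transition `t` is enabled at marking `M`. -/
def enabled (N : PetriNet m n) (M : Fin m → ℕ) (t : Fin n) : Prop :=
  ∀ p, N.Pre p t ≤ M p

/-- Firing transition `t` at marking `M`. -/
def fire (N : PetriNet m n) (M : Fin m → ℕ) (t : Fin n) : Fin m → ℕ :=
  fun p => M p + N.Post p t - N.Pre p t

/-- `fires N M σ M'` : the sequence `σ` is firable at `M` and yields `M'`. -/
inductive fires (N : PetriNet m n) : (Fin m → ℕ) → List (Fin n) → (Fin m → ℕ) → Prop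
  | nil (M : Fin m → ℕ) : fires N M [] M
  | cons {M M' : Fin m → ℕ} {t : Fin n} {σ : List (Fin n)} :
      N.enabled M t → fires N (N.fire M t) σ M' → fires N M (t :: σ) M'

/-- Firing vector of a sequence. -/
def fvec (σ : List (Fin n)) : Fin n → ℕ := fun t => σ.count t

/-- Arcs of the subnet induced by transition set `TI` (full net for `TI = Set.univ`). -/
def arc (N : PetriNet m n) (TI : Set (Fin n)) :
    (Fin m ⊕ Fin n) → (Fin m ⊕ Fin n) → Prop
  | Sum.inl p, Sum.inr t => t ∈ TI ∧ 0 < N.Pre p t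
  | Sum.inr t, Sum.inl p => t ∈ TI ∧ 0 < N.Post p t
  | _, _ => False

/-- The subnet induced by `TI` is acyclic: no directed cycle. -/
def SubnetAcyclic (N : PetriNet m n) (TI : Set (Fin n)) : Prop :=
  ∀ x, ¬ Relation.TransGen (N.arc TI) x x

/-- Transitions in structural conflict. -/
def Tconf (N : PetriNet m n) : Set (Fin n) :=
  {t | ∃ p, 0 < N.Pre p t ∧ ∃ t', t' ≠ t ∧ 0 < N.Pre p t'}

/-- `TI` is non-conflicting: `TI ⊆ T \ T_conf`. -/
def NonConflicting (N : PetriNet m n) (TI : Set (Fin n)) : Prop :=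
  ∀ t ∈ TI, t ∉ N.Tconf

/-- `TI` is non-increasing w.r.t. the GMEC weight vector `w`. -/
def NonIncreasing (N : PetriNet m n) (w : Fin m → ℤ) (TI : Set (Fin n)) : Prop :=
  ∀ t ∈ TI, ∑ p, w p * N.C p t ≤ 0

/-- The `TI`-induced subnet is conflict-free: every place has at most one
output transition among `TI`. -/
def ConflictFreeSubnet (N : PetriNet m n) (TI : Set (Fin n)) : Prop :=
  ∀ p : Fin m, ∀ t ∈ TI, ∀ t' ∈ TI, 0 < N.Pre p t → 0 < N.Pre p t' → t = t'

/-- `σ` consists only of transitions in `TI`. -/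
def ImplicitSeq (TI : Set (Fin n)) (σ : List (Fin n)) : Prop := ∀ t ∈ σ, t ∈ TI

/-- Implicit reach of a marking `Mb`. -/
def RI (N : PetriNet m n) (TI : Set (Fin n)) (Mb : Fin m → ℕ) : Set (Fin m → ℕ) :=
  {M | ∃ σ, ImplicitSeq TI σ ∧ N.fires Mb σ M}

/-- Reachability set. -/
def Reach (N : PetriNet m n) (M0 : Fin m → ℕ) : Set (Fin m → ℕ) :=
  {M | ∃ σ, N.fires M0 σ M}

/-- State equation `M' = M + C·y` (the nonnegativity `M' ≥ 0` is implicit in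
`M' : Fin m → ℕ`). -/
def stateEq (N : PetriNet m n) (M : Fin m → ℕ) (y : Fin n → ℕ) (M' : Fin m → ℕ) : Prop :=
  ∀ p, (M' p : ℤ) = (M p : ℤ) + ∑ t, N.C p t * (y t : ℤ)

/-- `σ` is an explanation of `t` at `M`: an implicit sequence after which `t`
is enabled. -/
def IsExplanation (N : PetriNet m n) (TI : Set (Fin n)) (M : Fin m → ℕ)
    (t : Fin n) (σ : List (Fin n)) : Prop :=
  ImplicitSeq TI σ ∧ ∃ M', N.fires M σ M' ∧ N.enabled M' t

/-- `y` is a minimal explanation vector of `t` at `M`. -/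
def MinExplVec (N : PetriNet m n) (TI : Set (Fin n)) (M : Fin m → ℕ)
    (t : Fin n) (y : Fin n → ℕ) : Prop :=
  (∃ σ, N.IsExplanation TI M t σ ∧ fvec σ = y) ∧
    ∀ σ', N.IsExplanation TI M t σ' → ¬ fvec σ' < y

/-- `y` is the firing vector of some implicit sequence firable at `M`. -/
def FirableVec (N : PetriNet m n) (TI : Set (Fin n)) (M : Fin m → ℕ)
    (y : Fin n → ℕ) : Prop :=
  ∃ σ M', ImplicitSeq TI σ ∧ fvec σ = y ∧ N.fires M σ M'

/-- `y` is a maximal implicit firing vector at `M`. -/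
def MaximalIFV (N : PetriNet m n) (TI : Set (Fin n)) (M : Fin m → ℕ)
    (y : Fin n → ℕ) : Prop :=
  N.FirableVec TI M y ∧ ∀ y', N.FirableVec TI M y' → ¬ y < y'

/-- `y` is the maximal implicit firing vector at `M`, dominating all others. -/
def GreatestIFV (N : PetriNet m n) (TI : Set (Fin n)) (M : Fin m → ℕ)
    (y : Fin n → ℕ) : Prop :=
  N.FirableVec TI M y ∧ ∀ y', N.FirableVec TI M y' → y' ≤ y

/-- One step of the BRG: fire a minimal explanation followed by an explicit
transition `t ∉ TI`. -/
def BRGstep (N : PetriNet m n) (TI : Set (Fin n)) (M1 M2 : Fin m → ℕ) : Prop :=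
  ∃ t ∉ TI, ∃ y, N.MinExplVec TI M1 t y ∧
    ∀ p, (M2 p : ℤ) = (M1 p : ℤ) + (∑ s, N.C p s * (y s : ℤ)) + N.C p t

/-- `Mb` is a basis marking of the BRG with initial marking `M0`. -/
def Basis (N : PetriNet m n) (TI : Set (Fin n)) (M0 Mb : Fin m → ℕ) : Prop :=
  Relation.ReflTransGen (N.BRGstep TI) M0 Mb

/-- A marking is dead if it enables no transition. -/
def Dead (N : PetriNet m n) (M : Fin m → ℕ) : Prop := ∀ t, ¬ N.enabled M t

/-- Final markings of the GMEC `(w, k)`. -/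
def Final (w : Fin m → ℤ) (k : ℤ) (M : Fin m → ℕ) : Prop :=
  ∑ p, w p * (M p : ℤ) ≤ k

/-- The plant is non-blocking. -/
def NonBlocking (N : PetriNet m n) (M0 : Fin m → ℕ) (w : Fin m → ℤ) (k : ℤ) : Prop :=
  ∀ M ∈ N.Reach M0, ∃ M' ∈ N.Reach M, Final w k M'

/-- Boundedness of the marked net. -/
def Bounded (N : PetriNet m n) (M0 : Fin m → ℕ) : Prop :=
  ∃ K, ∀ M ∈ N.Reach M0, ∀ p, M p ≤ K

end PetriNet


namespace PetriNet

variable {m n : ℕ}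

lemma fires_append {N : PetriNet m n} {M M1 M2 : Fin m → ℕ} {u v : List (Fin n)}
    (h1 : N.fires M u M1) (h2 : N.fires M1 v M2) : N.fires M (u ++ v) M2 := by
  induction h1 with
  | nil => simpa using h2
  | cons he _ ih => exact fires.cons he (ih h2)

lemma fire_int {N : PetriNet m n} {M : Fin m → ℕ} {t : Fin n} (h : N.enabled M t) (p : Fin m) :
    (N.fire M t p : ℤ) = (M p : ℤ) + N.C p t := by
  have := h p
  simp only [fire, C]
  omega

lemma stateEq_of_fires {N : PetriNet m n} {M M' : Fin m → ℕ} {σ : List (Fin n)}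
    (h : N.fires M σ M') (p : Fin m) :
    (M' p : ℤ) = (M p : ℤ) + ∑ t, N.C p t * (σ.count t : ℤ) := by
  induction h with
  | nil => simp
  | @cons M M' t σ he hf ih =>
    rw [ih, fire_int he]
    have : ∀ s : Fin n, ((t :: σ).count s : ℤ) = (σ.count s : ℤ) + if s = t then 1 else 0 := by
      intro s
      rcases eq_or_ne s t with rfl | hne
      · simp [List.count_cons]
      · simp [List.count_cons, hne, hne.symm]
    simp only [this, mul_add, Finset.sum_add_distrib]
    have : ∑ s : Fin n, N.C p s * (if s = t then (1:ℤ) else 0) = N.C p t := by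
      rw [Finset.sum_eq_single t] <;> simp +contextual
    rw [this]; ring

/-- In a conflict-free subnet, two distinct enabled implicit transitions commute. -/
lemma persist {N : PetriNet m n} {TI : Set (Fin n)} (hcf : N.ConflictFreeSubnet TI)
    {M : Fin m → ℕ} {s t : Fin n} (hs : s ∈ TI) (ht : t ∈ TI) (hne : s ≠ t)
    (hes : N.enabled M s) (het : N.enabled M t) :
    N.enabled (N.fire M s) t ∧ N.enabled (N.fire M t) s ∧
      N.fire (N.fire M s) t = N.fire (N.fire M t) s := by
  have key : ∀ p, ¬ (0 < N.Pre p s ∧ 0 < N.Pre p t) := by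
    intro p ⟨h1, h2⟩
    exact hne (hcf p s hs t ht h1 h2)
  refine ⟨fun p => ?_, fun p => ?_, funext fun p => ?_⟩ <;>
    · have h1 := hes p; have h2 := het p; have h3 := key p
      simp only [fire]; omega

/-- Key lemma: firing an enabled implicit transition `t` before an implicit
sequence `v` reaches (erase case analysis). -/
lemma keller_one {N : PetriNet m n} {TI : Set (Fin n)} (hcf : N.ConflictFreeSubnet TI)
    {t : Fin n} (ht : t ∈ TI) :
    ∀ (v : List (Fin n)) (M M' : Fin m → ℕ), ImplicitSeq TI v →
      N.enabled M t → N.fires M v M' →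
      N.fires (N.fire M t) (v.erase t) (if t ∈ v then M' else N.fire M' t) := by
  intro v
  induction v with
  | nil =>
    intro M M' _ _ hf
    cases hf
    simpa using fires.nil _
  | cons s v ih =>
    intro M M' himp het hf
    cases hf with
    | cons hes hf' =>
      rcases eq_or_ne s t with rfl | hne
      · simpa using hf'
      · have hs : s ∈ TI := himp s (by simp)
        obtain ⟨h1, h2, h3⟩ := persist hcf hs ht hne hes het
        have := ih (N.fire M s) M' (fun x hx => himp x (by simp [hx])) h1 hf'
        rw [h3] at this
        have herase : (s :: v).erase t = s :: v.erase t := by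
          simp [List.erase_cons, hne]
        have hmem : (t ∈ s :: v) ↔ (t ∈ v) := by simp [hne.symm]
        rw [herase]
        by_cases hv : t ∈ v
        · simp only [hmem, hv, if_true] at *
          exact fires.cons h2 this
        · simp only [hmem, hv, if_false] at *
          exact fires.cons h2 this

lemma keller {N : PetriNet m n} {TI : Set (Fin n)} (hcf : N.ConflictFreeSubnet TI) :
    ∀ (u : List (Fin n)) (M Mu M' : Fin m → ℕ) (v : List (Fin n)),
      ImplicitSeq TI u → ImplicitSeq TI v →
      N.fires M u Mu → N.fires M v M' →
      ∃ Mf, N.fires Mu (v.diff u) Mf := by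
  intro u
  induction u with
  | nil =>
    intro M Mu M' v _ _ hu hv
    cases hu
    exact ⟨M', by simpa using hv⟩
  | cons t u ih =>
    intro M Mu M' v himpu himpv hu hv
    cases hu with
    | cons het hu' =>
      have ht : t ∈ TI := himpu t (by simp)
      have hk := keller_one hcf ht v M M' himpv het hv
      have himpe : ImplicitSeq TI (v.erase t) :=
        fun x hx => himpv x (List.erase_sublist.mem hx)
      have := ih (N.fire M t) Mu _ (v.erase t)
        (fun x hx => himpu x (by simp [hx])) himpe hu' hk
      simpa [List.diff_cons] using this

lemma count_diff' (t : Fin n) : ∀ (u v : List (Fin n)),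
    (v.diff u).count t = v.count t - u.count t := by
  intro u
  induction u with
  | nil => simp
  | cons s u ih =>
    intro v
    rw [List.diff_cons, ih]
    rcases eq_or_ne t s with rfl | hne
    · by_cases hv : t ∈ v
      · rw [List.count_erase_self]
        have : 0 < v.count t := List.count_pos_iff.2 hv
        simp [List.count_cons]; omega
      · have h0 : v.count t = 0 := List.count_eq_zero.2 hv
        rw [List.erase_of_not_mem hv, h0]
        simp [List.count_cons]
    · rw [List.count_erase_of_ne hne]
      simp [List.count_cons, hne, hne.symm]

end PetriNet

open PetriNet

/-- every marking in the implicit reach of `M_b` can reach the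
i-maximal marking `M_{b,max}` by firing implicit transitions only. -/
theorem imax_reachable_from_implicit_reach {m n : ℕ} (N : PetriNet m n)
    (TI : Set (Fin n))
    (hacyc : N.SubnetAcyclic TI) (hcf : N.ConflictFreeSubnet TI)
    (Mb Mbmax : Fin m → ℕ) (ymax : Fin n → ℕ)
    (hmax : N.GreatestIFV TI Mb ymax)
    (hreach : ∃ σ, ImplicitSeq TI σ ∧ fvec σ = ymax ∧ N.fires Mb σ Mbmax) :
    ∀ M ∈ N.RI TI Mb, ∃ σ : List (Fin n), ImplicitSeq TI σ ∧ N.fires M σ Mbmax := by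
  obtain ⟨σx, hσx_imp, hσx_vec, hσx_f⟩ := hreach
  intro M hM
  obtain ⟨σ, hσ_imp, hσ_f⟩ := hM
  -- fvec σ ≤ ymax
  have hle : fvec σ ≤ ymax := hmax.2 _ ⟨σ, M, hσ_imp, rfl, hσ_f⟩
  -- residual
  obtain ⟨Mf, hMf⟩ := keller hcf σ Mb M Mbmax σx hσ_imp hσx_imp hσ_f hσx_f
  have himp_w : ImplicitSeq TI (σx.diff σ) :=
    fun x hx => hσx_imp x ((σx.diff_sublist σ).mem hx)
  refine ⟨σx.diff σ, himp_w, ?_⟩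
  -- show Mf = Mbmax via state equation
  have hfull : N.fires Mb (σ ++ σx.diff σ) Mf := fires_append hσ_f hMf
  have hvec : ∀ t, ((σ ++ σx.diff σ).count t : ℤ) = (ymax t : ℤ) := by
    intro t
    have h1 := count_diff' t σ σx
    have h2 : σ.count t ≤ ymax t := hle t
    have h3 : σx.count t = ymax t := by rw [← hσx_vec]; rfl
    rw [List.count_append, h1, h3]
    omega
  have heq : Mf = Mbmax := by
    funext p
    have e1 := stateEq_of_fires hfull p
    have e2 := stateEq_of_fires hσx_f p
    simp only [hvec] at e1
    have hvx : ∀ t, ((σx.count t : ℤ)) = (ymax t : ℤ) := by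
      intro t; rw [← hσx_vec]; rfl
    simp only [hvx] at e2
    have : (Mf p : ℤ) = (Mbmax p : ℤ) := by rw [e1, e2]
    exact_mod_cast this
  rwa [heq] at hMf
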